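/- Let x_1, ..., x_n be real numbers (n ≥ 1). Then log((1/n)·∑_{i=1}^n e^{x_i}) − (1/n)·∑_{i=1}^n x_i ≥ (1/(4n³)) · min{ ∑_{1≤i<j≤n} |x_i − x_j|, ∑_{1≤i<j≤n} (x_i − x_j)² }. -/

import Mathlib

open Finset Real

private lemma exp_quad {y : ℝ} (h : -2 ≤ y) : 1 + y + y^2/4 ≤ Real.exp y := by
  have h1 := Real.add_one_le_exp (y/2)
  have h2 : Real.exp (y/2) * Real.exp (y/2) = Real.exp y := by
    rw [← Real.exp_add]; norm_num
  nlinarith [Real.exp_pos (y/2)]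

private lemma g_nonneg (y : ℝ) : 0 ≤ Real.exp y - 1 - y := by
  have := Real.add_one_le_exp y; linarith

private lemma log_ge_div {t : ℝ} (h : 0 ≤ t) : t/(1+t) ≤ Real.log (1+t) := by
  have h1 : (0:ℝ) < 1 + t := by linarith
  have h2 := Real.log_le_sub_one_of_pos (x := 1/(1+t)) (by positivity)
  rw [Real.log_div one_ne_zero (by positivity), Real.log_one] at h2
  have h3 : (1:ℝ)/(1+t) - 1 = -(t/(1+t)) := by field_simp; ring
  linarith [h2, h3.le, h3.ge]

private lemma key_neg {r : ℝ} (hr0 : 0 ≤ r) (hr : r ≤ 1/2) :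
    Real.exp r ≤ 1 + Real.exp (-1) + 2*r^2 := by
  have h1 := Real.add_one_le_exp (-(r/2))
  have hp := Real.exp_pos (r/2)
  have h2 : Real.exp (r/2) * Real.exp (-(r/2)) = 1 := by
    rw [← Real.exp_add]; norm_num
  have h3 : Real.exp (r/2) * (1 - r/2) ≤ 1 := by nlinarith
  have h4 : Real.exp (r/2) * Real.exp (r/2) = Real.exp r := by
    rw [← Real.exp_add]; norm_num
  have h35 : 0 ≤ Real.exp (r/2) * (1 - r/2) := by
    have : (0:ℝ) ≤ 1 - r/2 := by linarith
    positivity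
  have h5 : Real.exp r * (1 - r/2)^2 ≤ 1 := by
    have := mul_le_mul h3 h3 h35 zero_le_one
    nlinarith
  have he : Real.exp 1 < 2.7182818286 := Real.exp_one_lt_d9
  have hc : Real.exp (-1) * Real.exp 1 = 1 := by rw [← Real.exp_add]; norm_num
  have hc2 : (0.3678:ℝ) ≤ Real.exp (-1) := by nlinarith [Real.exp_pos 1]
  nlinarith [Real.exp_pos r, sq_nonneg r, sq_nonneg (1 - r/2), sq_nonneg (r - 1/2)]

private lemma half_pairs {n : ℕ} (f : Fin n → Fin n → ℝ) (hsym : ∀ i j, f i j = f j i)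
    (hnn : ∀ i j, 0 ≤ f i j) :
    2 * ∑ p ∈ Finset.univ.filter (fun p : Fin n × Fin n => p.1 < p.2), f p.1 p.2 ≤
      ∑ i, ∑ j, f i j := by
  classical
  set s := Finset.univ.filter (fun p : Fin n × Fin n => p.1 < p.2) with hs
  set t := Finset.univ.filter (fun p : Fin n × Fin n => p.2 < p.1) with ht
  have hst : ∑ p ∈ s, f p.1 p.2 = ∑ p ∈ t, f p.1 p.2 := by
    apply Finset.sum_nbij' (i := Prod.swap) (j := Prod.swap)
    · intro a ha; simp [hs, ht] at ha ⊢; exact ha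
    · intro a ha; simp [hs, ht] at ha ⊢; exact ha
    · intro a _; simp
    · intro a _; simp
    · intro a _; simp [hsym]
  have hdisj : Disjoint s t := by
    rw [Finset.disjoint_left]
    intro p hp hq
    simp [hs, ht] at hp hq
    exact absurd hq (lt_asymm hp)
  have hunion : ∑ p ∈ s, f p.1 p.2 + ∑ p ∈ t, f p.1 p.2 = ∑ p ∈ s ∪ t, f p.1 p.2 :=
    (Finset.sum_union hdisj).symm
  have hle : ∑ p ∈ s ∪ t, f p.1 p.2 ≤ ∑ p ∈ (Finset.univ : Finset (Fin n × Fin n)), f p.1 p.2 :=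
    Finset.sum_le_sum_of_subset_of_nonneg (Finset.subset_univ _) (fun p _ _ => hnn _ _)
  have huniv : ∑ p ∈ (Finset.univ : Finset (Fin n × Fin n)), f p.1 p.2 = ∑ i, ∑ j, f i j := by
    rw [← Finset.univ_product_univ, Finset.sum_product]
  linarith

set_option maxHeartbeats 1000000 in
theorem logsumexp_minus_average_ge (n : ℕ) (hn : 1 ≤ n) (x : Fin n → ℝ) :
    Real.log ((1 / (n : ℝ)) * ∑ i, Real.exp (x i)) - (1 / (n : ℝ)) * ∑ i, x i ≥
      (1 / (4 * (n : ℝ) ^ 3)) *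
        min (∑ p ∈ Finset.univ.filter (fun p : Fin n × Fin n => p.1 < p.2), |x p.1 - x p.2|)
          (∑ p ∈ Finset.univ.filter (fun p : Fin n × Fin n => p.1 < p.2), (x p.1 - x p.2) ^ 2) := by
  classical
  have hn0 : (0:ℝ) < n := by
    have : (1:ℝ) ≤ n := by exact_mod_cast hn
    linarith
  obtain ⟨μ, hμ⟩ : ∃ μ : ℝ, μ = (1 / (n:ℝ)) * ∑ i, x i := ⟨_, rfl⟩
  rw [← hμ]
  obtain ⟨y, hy⟩ : ∃ y : Fin n → ℝ, y = fun i => x i - μ := ⟨_, rfl⟩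
  have hyi : ∀ i, y i = x i - μ := fun i => by rw [hy]
  have hsumy : ∑ i, y i = 0 := by
    rw [Finset.sum_congr rfl (fun i _ => hyi i), Finset.sum_sub_distrib, Finset.sum_const,
      Finset.card_univ, Fintype.card_fin, nsmul_eq_mul, hμ]
    field_simp
    ring
  obtain ⟨G, hG⟩ : ∃ G : ℝ, G = ∑ i, (Real.exp (y i) - 1 - y i) := ⟨_, rfl⟩
  have hG0 : 0 ≤ G := by
    rw [hG]; exact Finset.sum_nonneg fun i _ => g_nonneg (y i)
  have hGn0 : (0:ℝ) < 1 + G / n := by positivity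
  have hLHS : Real.log ((1 / (n : ℝ)) * ∑ i, Real.exp (x i)) - μ = Real.log (1 + G / n) := by
    have h1 : ∀ i : Fin n, Real.exp (x i) = Real.exp μ * Real.exp (y i) := fun i => by
      rw [← Real.exp_add, hyi i]; congr 1; ring
    have h3 : ∑ i, Real.exp (y i) = G + n := by
      have e1 : ∀ i : Fin n, Real.exp (y i) = (Real.exp (y i) - 1 - y i) + 1 + y i := fun i => by
        ring
      rw [Finset.sum_congr rfl (fun i _ => e1 i), Finset.sum_add_distrib, Finset.sum_add_distrib,
        hsumy, Finset.sum_const, Finset.card_univ, Fintype.card_fin, nsmul_eq_mul, ← hG]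
      push_cast; ring
    have h2 : (1 / (n:ℝ)) * ∑ i, Real.exp (x i) = Real.exp μ * (1 + G/n) := by
      rw [Finset.sum_congr rfl (fun i _ => h1 i), ← Finset.mul_sum, h3]
      field_simp
      ring
    rw [h2, Real.log_mul (Real.exp_ne_zero μ) (by positivity), Real.log_exp]
    ring
  rw [hLHS]
  obtain ⟨S1, hS1def⟩ : ∃ S1 : ℝ,
      S1 = ∑ p ∈ Finset.univ.filter (fun p : Fin n × Fin n => p.1 < p.2), |y p.1 - y p.2| :=
    ⟨_, rfl⟩
  obtain ⟨S2, hS2def⟩ : ∃ S2 : ℝ,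
      S2 = ∑ p ∈ Finset.univ.filter (fun p : Fin n × Fin n => p.1 < p.2), (y p.1 - y p.2)^2 :=
    ⟨_, rfl⟩
  have e1 : ∑ p ∈ Finset.univ.filter (fun p : Fin n × Fin n => p.1 < p.2), |x p.1 - x p.2| = S1 := by
    rw [hS1def]
    exact Finset.sum_congr rfl (fun p _ => by rw [hyi, hyi]; congr 1; ring)
  have e2 : ∑ p ∈ Finset.univ.filter (fun p : Fin n × Fin n => p.1 < p.2), (x p.1 - x p.2)^2 = S2 := by
    rw [hS2def]
    exact Finset.sum_congr rfl (fun p _ => by rw [hyi, hyi]; ring)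
  rw [e1, e2]
  have hS1nn : 0 ≤ S1 := by rw [hS1def]; exact Finset.sum_nonneg fun p _ => abs_nonneg _
  have hS2nn : 0 ≤ S2 := by rw [hS2def]; exact Finset.sum_nonneg fun p _ => sq_nonneg _
  -- Reduce to a bound on log (1 + G)
  suffices main : min S1 S2 / (4*(n:ℝ)^2) ≤ Real.log (1 + G) by
    have hBer : Real.log (1 + G) ≤ n * Real.log (1 + G/n) := by
      have hb : 1 + (n:ℝ) * (G/n) ≤ (1 + G/n)^n :=
        one_add_mul_le_pow (by have := div_nonneg hG0 hn0.le; linarith) n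
      have hb2 : (n:ℝ) * (G/n) = G := by field_simp
      rw [hb2] at hb
      calc Real.log (1+G) ≤ Real.log ((1+G/n)^n) := Real.log_le_log (by linarith) hb
        _ = n * Real.log (1+G/n) := Real.log_pow _ _
    have h : min S1 S2 / (4*(n:ℝ)^2) ≤ n * Real.log (1 + G/n) := le_trans main hBer
    have e : (1/(4*(n:ℝ)^3)) * min S1 S2 = (min S1 S2/(4*(n:ℝ)^2)) / n := by
      rw [div_div]; ring
    rw [ge_iff_le, e, div_le_iff₀ hn0]
    linarith
  -- n = 1 case: both pair sums are zero
  rcases Nat.lt_or_ge n 2 with h2 | h2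
  · have hempty : Finset.univ.filter (fun p : Fin n × Fin n => p.1 < p.2) = ∅ := by
      apply Finset.filter_eq_empty_iff.2
      intro p _
      have h1 : (p.1 : ℕ) < n := p.1.isLt
      have h2' : (p.2 : ℕ) < n := p.2.isLt
      rw [Fin.lt_def]
      omega
    have hS10 : S1 = 0 := by rw [hS1def, hempty, Finset.sum_empty]
    have hS20 : S2 = 0 := by rw [hS2def, hempty, Finset.sum_empty]
    rw [hS10, hS20, min_self, zero_div]
    exact Real.log_nonneg (by linarith)
  have hn2 : (2:ℝ) ≤ n := by exact_mod_cast h2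
  by_cases hY : ∀ i, |y i| ≤ 1
  · -- Case I : all |y i| ≤ 1; use S2 ≤ n * V
    obtain ⟨V, hV⟩ : ∃ V : ℝ, V = ∑ i, (y i)^2 := ⟨_, rfl⟩
    have hV0 : 0 ≤ V := by rw [hV]; exact Finset.sum_nonneg fun i _ => sq_nonneg _
    have hGV : V/4 ≤ G := by
      rw [hV, hG, Finset.sum_div]
      apply Finset.sum_le_sum
      intro i _
      have hb := abs_le.mp (hY i)
      have h := exp_quad (y := y i) (by linarith)
      linarith
    have hVn : V ≤ n := by
      rw [hV]
      have : ∑ i, (y i)^2 ≤ ∑ _i : Fin n, (1:ℝ) := by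
        apply Finset.sum_le_sum
        intro i _
        have hb := abs_le.mp (hY i)
        nlinarith
      simpa using this
    have hS2 : S2 ≤ n * V := by
      have hhp := half_pairs (fun i j => (y i - y j)^2) (fun i j => by ring)
        (fun i j => sq_nonneg _)
      have h1 : ∀ i : Fin n, ∑ j, (y i - y j)^2 = n * (y i)^2 - 2 * y i * (∑ j, y j) + V := by
        intro i
        have expand : ∑ j, (y i - y j)^2
            = (∑ _j : Fin n, (y i)^2) - ∑ j, (2 * y i * y j) + ∑ j, (y j)^2 := by
          rw [← Finset.sum_sub_distrib, ← Finset.sum_add_distrib]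
          exact Finset.sum_congr rfl (fun j _ => by ring)
        rw [expand, ← Finset.mul_sum, Finset.sum_const, Finset.card_univ, Fintype.card_fin,
          nsmul_eq_mul, ← hV]
      have hdd : ∑ i, ∑ j, (y i - y j)^2 = 2 * n * V := by
        rw [Finset.sum_congr rfl (fun i _ => h1 i), hsumy]
        have e : ∀ i : Fin n, (n:ℝ) * (y i)^2 - 2 * y i * 0 + V = n * (y i)^2 + V := fun i => by
          ring
        rw [Finset.sum_congr rfl (fun i _ => e i), Finset.sum_add_distrib, ← Finset.mul_sum,
          Finset.sum_const, Finset.card_univ, Fintype.card_fin, nsmul_eq_mul, ← hV]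
        ring
      rw [hdd] at hhp
      rw [hS2def]
      have : ∑ p ∈ Finset.univ.filter (fun p : Fin n × Fin n => p.1 < p.2), (y p.1 - y p.2)^2
          = ∑ p ∈ Finset.univ.filter (fun p : Fin n × Fin n => p.1 < p.2),
            (fun i j => (y i - y j)^2) p.1 p.2 := rfl
      rw [this]
      linarith
    have hmin : min S1 S2 ≤ n * V := le_trans (min_le_right _ _) hS2
    have hmin0 : 0 ≤ min S1 S2 := le_min hS1nn hS2nn
    have hlog := log_ge_div hG0
    have h2' : min S1 S2/(4*(n:ℝ)^2) ≤ G/(1+G) := by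
      rw [div_le_div_iff₀ (by positivity) (by positivity)]
      nlinarith [hmin, hmin0, hGV, hVn, hG0, hV0, hn2, hn0,
        mul_le_mul_of_nonneg_right hmin (show (0:ℝ) ≤ 1+G by linarith),
        mul_nonneg hG0 (sub_nonneg.2 hVn), mul_nonneg hG0 hG0]
    linarith
  · -- Case II : some |y k| > 1; use S1 ≤ 2 n P
    push_neg at hY
    obtain ⟨k, hk⟩ := hY
    obtain ⟨pos, hpos⟩ : ∃ pos : Finset (Fin n), pos = Finset.univ.filter (fun i => 0 < y i) :=
      ⟨_, rfl⟩
    obtain ⟨P, hP⟩ : ∃ P : ℝ, P = ∑ i ∈ pos, y i := ⟨_, rfl⟩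
    have hposmem : ∀ i ∈ pos, 0 < y i := fun i hi => by
      rw [hpos] at hi; exact (Finset.mem_filter.mp hi).2
    have hPnn : 0 ≤ P := by
      rw [hP]; exact Finset.sum_nonneg fun i hi => (hposmem i hi).le
    have hnegsum : ∑ i ∈ Finset.univ.filter (fun i => ¬ 0 < y i), y i = -P := by
      have h := Finset.sum_filter_add_sum_filter_not Finset.univ (fun i => 0 < y i) y
      rw [hsumy, ← hpos, ← hP] at h
      linarith
    have hP1 : 1 < P := by
      rcases lt_or_ge 0 (y k) with hk0 | hk0
      · have hkmem : k ∈ pos := by rw [hpos]; exact Finset.mem_filter.mpr ⟨Finset.mem_univ k, hk0⟩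
        have h1 : y k ≤ P := by
          rw [hP]; exact Finset.single_le_sum (f := y) (fun i hi => (hposmem i hi).le) hkmem
        have h2 : |y k| = y k := abs_of_pos hk0
        rw [h2] at hk
        linarith
      · have hkmem : k ∈ Finset.univ.filter (fun i => ¬ 0 < y i) :=
          Finset.mem_filter.mpr ⟨Finset.mem_univ k, not_lt.mpr hk0⟩
        have h1 : -y k ≤ ∑ i ∈ Finset.univ.filter (fun i => ¬ 0 < y i), (-y i) :=
          Finset.single_le_sum (f := fun i => -y i) (fun i hi => by
            have h := (Finset.mem_filter.mp hi).2
            push_neg at h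
            simpa using neg_nonneg.mpr h) hkmem
        rw [Finset.sum_neg_distrib, hnegsum, neg_neg] at h1
        have h2 : |y k| = -y k := abs_of_nonpos hk0
        rw [h2] at hk
        linarith
    have hS1b : S1 ≤ 2 * n * P := by
      have hhp := half_pairs (fun i j => |y i - y j|) (fun i j => abs_sub_comm _ _)
        (fun i j => abs_nonneg _)
      have hA : ∑ i, |y i| = 2 * P := by
        have h := Finset.sum_filter_add_sum_filter_not Finset.univ (fun i => 0 < y i)
          (fun i => |y i|)
        have ea : ∑ i ∈ pos, |y i| = P := by
          rw [hP]
          exact Finset.sum_congr rfl fun i hi => abs_of_pos (hposmem i hi)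
        have eb : ∑ i ∈ Finset.univ.filter (fun i => ¬ 0 < y i), |y i| = P := by
          have e : ∑ i ∈ Finset.univ.filter (fun i => ¬ 0 < y i), |y i|
              = ∑ i ∈ Finset.univ.filter (fun i => ¬ 0 < y i), (-y i) := by
            refine Finset.sum_congr rfl fun i hi => ?_
            have := (Finset.mem_filter.mp hi).2
            push_neg at this
            exact abs_of_nonpos this
          rw [e, Finset.sum_neg_distrib, hnegsum]
          ring
        rw [← hpos, ea, eb] at h
        linarith
      have hbd : ∑ i, ∑ j, |y i - y j| ≤ 4 * n * P := by
        have step : ∑ i, ∑ j, |y i - y j| ≤ ∑ i, ∑ j, (|y i| + |y j|) := by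
          apply Finset.sum_le_sum
          intro i _
          apply Finset.sum_le_sum
          intro j _
          calc |y i - y j| = |y i + (- y j)| := by rw [sub_eq_add_neg]
            _ ≤ |y i| + |-(y j)| := abs_add_le _ _
            _ = |y i| + |y j| := by rw [abs_neg]
        have step2 : ∑ i, ∑ j, (|y i| + |y j|) = 4 * n * P := by
          have e : ∀ i : Fin n, ∑ _j : Fin n, |y i| + ∑ j, |y j| = n * |y i| + 2 * P := by
            intro i
            rw [Finset.sum_const, Finset.card_univ, Fintype.card_fin, nsmul_eq_mul, hA]
          have e' : ∀ i : Fin n, ∑ j, (|y i| + |y j|) = n * |y i| + 2 * P := by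
            intro i
            rw [Finset.sum_add_distrib, Finset.sum_const, Finset.card_univ, Fintype.card_fin,
              nsmul_eq_mul, hA]
          rw [Finset.sum_congr rfl (fun i _ => e' i), Finset.sum_add_distrib, ← Finset.mul_sum,
            hA, Finset.sum_const, Finset.card_univ, Fintype.card_fin, nsmul_eq_mul]
          ring
        linarith
      rw [hS1def]
      have : ∑ p ∈ Finset.univ.filter (fun p : Fin n × Fin n => p.1 < p.2), |y p.1 - y p.2|
          = ∑ p ∈ Finset.univ.filter (fun p : Fin n × Fin n => p.1 < p.2),
            (fun i j => |y i - y j|) p.1 p.2 := rfl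
      rw [this]
      linarith
    have hmin1 : min S1 S2 ≤ 2*n*P := le_trans (min_le_left _ _) hS1b
    have hred : min S1 S2/(4*(n:ℝ)^2) ≤ P/(2*n) := by
      rw [div_le_div_iff₀ (by positivity) (by positivity)]
      nlinarith [hmin1, hn0]
    have hPlog : P/(2*(n:ℝ)) ≤ Real.log (1+G) := by
      clear hμ hsumy hLHS hS1def hS2def e1 e2 hS1nn hS2nn hS1b hmin1 hred hnegsum hGn0 hy hyi
      rw [Real.le_log_iff_exp_le (by linarith)]
      by_cases hm : (n:ℝ) ≤ P
      · -- IIa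
        have hposne : pos.Nonempty := by
          by_contra h
          rw [Finset.not_nonempty_iff_eq_empty] at h
          rw [h, Finset.sum_empty] at hP
          linarith
        have hwit : ∃ j ∈ pos, P/(n:ℝ) ≤ y j := by
          apply Finset.exists_le_of_sum_le hposne
          have hc : ∑ _i ∈ pos, P/(n:ℝ) = pos.card * (P/n) := by
            rw [Finset.sum_const, nsmul_eq_mul]
          rw [hc, ← hP]
          have hcard : (pos.card : ℝ) ≤ n := by
            have h := Finset.card_le_univ pos
            simp only [Finset.card_univ, Fintype.card_fin] at h
            exact_mod_cast h
          calc (pos.card : ℝ) * (P/n) ≤ n * (P/n) :=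
              mul_le_mul_of_nonneg_right hcard (by positivity)
            _ = P := by field_simp
        obtain ⟨j, hjmem, hj⟩ := hwit
        obtain ⟨m, hmdef⟩ : ∃ m : ℝ, m = P/(n:ℝ) := ⟨_, rfl⟩
        rw [← hmdef] at hj
        have hm1 : 1 ≤ m := by rw [hmdef, le_div_iff₀ hn0]; linarith
        have hGj : Real.exp (y j) - 1 - y j ≤ G := by
          rw [hG]; exact Finset.single_le_sum (fun i _ => g_nonneg (y i)) (Finset.mem_univ j)
        have hmono : Real.exp m - 1 - m ≤ Real.exp (y j) - 1 - y j := by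
          have h1 := Real.add_one_le_exp (y j - m)
          have h2 : Real.exp m * Real.exp (y j - m) = Real.exp (y j) := by
            rw [← Real.exp_add]; congr 1; ring
          have h3 : (1:ℝ) ≤ Real.exp m := Real.one_le_exp (by linarith)
          nlinarith [Real.exp_pos m]
        have hPm : P/(2*(n:ℝ)) = m/2 := by rw [hmdef, div_div]; ring
        rw [hPm]
        obtain ⟨c, hc⟩ : ∃ c : ℝ, c = Real.exp ((1:ℝ)/2) := ⟨_, rfl⟩
        have hcc : c * c = Real.exp 1 := by rw [hc, ← Real.exp_add]; norm_num
        have hc1 : (1:ℝ) ≤ c := by rw [hc]; exact Real.one_le_exp (by norm_num)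
        have hc17 : c ≤ 1.7 := by nlinarith [hcc, Real.exp_one_lt_d9, sq_nonneg (c - 17/10)]
        have hc16 : (1.64:ℝ) ≤ c := by nlinarith [hcc, Real.exp_one_gt_d9, sq_nonneg (c - 164/100)]
        have hem : Real.exp 1 * m ≤ Real.exp m := by
          have h1 := Real.add_one_le_exp (m - 1)
          have h2 : Real.exp 1 * Real.exp (m-1) = Real.exp m := by
            rw [← Real.exp_add]; congr 1; ring
          nlinarith [Real.exp_pos 1]
        have h6 : Real.exp (m/2) * c ≤ Real.exp m := by
          have hhalf : Real.exp (m/2) * c = Real.exp (m/2 + 1/2) := by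
            rw [hc, ← Real.exp_add]
          rw [hhalf]
          exact Real.exp_le_exp.2 (by linarith)
        have h7 : m * c ≤ Real.exp m * (c - 1) := by
          have hexpm : c * c * m ≤ Real.exp m := by rw [hcc]; exact hem
          have hccc : 1 ≤ c * (c - 1) := by
            have e : c * (c - 1) = c * c - c := by ring
            rw [e, hcc]
            linarith [hc17, Real.exp_one_gt_d9]
          have t1 : c * c * m * (c - 1) ≤ Real.exp m * (c - 1) :=
            mul_le_mul_of_nonneg_right hexpm (by linarith)
          have t2 : m * c * 1 ≤ m * c * (c * (c - 1)) :=
            mul_le_mul_of_nonneg_left hccc (mul_nonneg (by linarith) (by linarith))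
          nlinarith [t1, t2]
        have hfin : Real.exp (m/2) ≤ Real.exp m - m := by
          have t3 : Real.exp (m/2) * c ≤ (Real.exp m - m) * c := by
            have e7 : Real.exp m * (c - 1) = Real.exp m * c - Real.exp m := by ring
            have e8 : (Real.exp m - m) * c = Real.exp m * c - m * c := by ring
            rw [e8]
            rw [e7] at h7
            linarith [h6, h7]
          exact le_of_mul_le_mul_right t3 (by linarith)
        linarith
      · push_neg at hm
        obtain ⟨r, hr⟩ : ∃ r : ℝ, r = P/(2*(n:ℝ)) := ⟨_, rfl⟩
        rw [← hr]
        have hr0 : 0 ≤ r := by rw [hr]; positivity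
        have hrhalf : r ≤ 1/2 := by
          rw [hr, div_le_div_iff₀ (by positivity) (by norm_num)]
          linarith
        rcases lt_or_ge 0 (y k) with hk0 | hk0
        · -- big positive element
          have habs : |y k| = y k := abs_of_pos hk0
          rw [habs] at hk
          have hGk : Real.exp (y k) - 1 - y k ≤ G := by
            rw [hG]; exact Finset.single_le_sum (fun i _ => g_nonneg (y i)) (Finset.mem_univ k)
          have h1 := Real.add_one_le_exp (y k - 1)
          have h2 : Real.exp 1 * Real.exp (y k - 1) = Real.exp (y k) := by
            rw [← Real.exp_add]; congr 1; ring
          have h4 : Real.exp 1 * y k ≤ Real.exp (y k) := by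
            have t := mul_le_mul_of_nonneg_left h1 (Real.exp_pos 1).le
            rw [h2] at t
            nlinarith [t]
          have hprod : 0 ≤ (Real.exp 1 - 1) * (y k - 1) :=
            mul_nonneg (by nlinarith [Real.exp_one_gt_d9]) (by linarith)
          have hge : Real.exp 1 - 2 ≤ G := by nlinarith [h4, hprod, hGk]
          have hr17 : Real.exp r ≤ Real.exp ((1:ℝ)/2) := Real.exp_le_exp.2 (by linarith)
          have hcc : Real.exp ((1:ℝ)/2) * Real.exp ((1:ℝ)/2) = Real.exp 1 := by
            rw [← Real.exp_add]; norm_num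
          have hc1 : (1:ℝ) ≤ Real.exp ((1:ℝ)/2) := Real.one_le_exp (by norm_num)
          have hc17 : Real.exp ((1:ℝ)/2) ≤ 1.7 := by nlinarith [Real.exp_one_lt_d9]
          linarith [Real.exp_one_gt_d9, hr17, hc17, hge]
        · -- big negative element
          have habs : |y k| = -y k := abs_of_nonpos hk0
          rw [habs] at hk
          have hyk : y k < -1 := by linarith
          have hknotpos : k ∉ pos := by
            rw [hpos, Finset.mem_filter]
            push_neg
            intro _
            linarith
          have hsplit : (Real.exp (y k) - 1 - y k) + ∑ i ∈ pos, (Real.exp (y i) - 1 - y i) ≤ G := by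
            have hins : (Real.exp (y k) - 1 - y k) + ∑ i ∈ pos, (Real.exp (y i) - 1 - y i)
                = ∑ i ∈ insert k pos, (Real.exp (y i) - 1 - y i) :=
              (Finset.sum_insert (f := fun i => Real.exp (y i) - 1 - y i) hknotpos).symm
            rw [hins, hG]
            exact Finset.sum_le_sum_of_subset_of_nonneg (Finset.subset_univ _)
              (fun i _ _ => g_nonneg (y i))
          have hgk : Real.exp (-1) ≤ Real.exp (y k) - 1 - y k := by
            have h1 := Real.add_one_le_exp (y k + 1)
            have h2 : Real.exp (-1) * Real.exp (y k + 1) = Real.exp (y k) := by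
              rw [← Real.exp_add]; congr 1; ring
            have h3 : Real.exp (-1) * Real.exp 1 = 1 := by rw [← Real.exp_add]; norm_num
            have hexp1 : (1:ℝ) ≤ Real.exp 1 := Real.one_le_exp (by norm_num)
            have he1 : Real.exp (-1) ≤ 1 := by nlinarith [Real.exp_pos (-1)]
            have hmul := mul_le_mul_of_nonneg_left h1 (Real.exp_pos (-1)).le
            have hm0 : 0 ≤ (-(y k + 1)) * (1 - Real.exp (-1)) :=
              mul_nonneg (by linarith) (by linarith)
            nlinarith [hmul, hm0, h2]
          have hquad : ∑ i ∈ pos, (y i)^2 / 4 ≤ ∑ i ∈ pos, (Real.exp (y i) - 1 - y i) := by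
            apply Finset.sum_le_sum
            intro i hi
            have hyi2 : 0 < y i := hposmem i hi
            have := exp_quad (y := y i) (by linarith)
            linarith
          have hCS : P^2 ≤ n * ∑ i ∈ pos, (y i)^2 := by
            have h := Finset.sum_mul_sq_le_sq_mul_sq pos y (fun _ => 1)
            simp only [mul_one, one_pow] at h
            have hcard : (pos.card : ℝ) ≤ n := by
              have h := Finset.card_le_univ pos
              simp only [Finset.card_univ, Fintype.card_fin] at h
              exact_mod_cast h
            have hsq : 0 ≤ ∑ i ∈ pos, (y i)^2 := Finset.sum_nonneg fun i _ => sq_nonneg _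
            have hsc : ∑ _i ∈ pos, (1:ℝ) = pos.card := by
              rw [Finset.sum_const, nsmul_eq_mul, mul_one]
            rw [hsc] at h
            calc P^2 ≤ (∑ i ∈ pos, (y i)^2) * pos.card := by rw [hP]; exact h
              _ ≤ (∑ i ∈ pos, (y i)^2) * n := mul_le_mul_of_nonneg_left hcard hsq
              _ = n * ∑ i ∈ pos, (y i)^2 := by ring
          have hP2r : P = 2*(n:ℝ)*r := by rw [hr]; field_simp
          have hkey := key_neg hr0 hrhalf
          have hquad2 : (n:ℝ) * r^2 ≤ ∑ i ∈ pos, (y i)^2 / 4 := by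
            rw [hP2r] at hCS
            rw [← Finset.sum_div, le_div_iff₀ (by norm_num : (0:ℝ) < 4)]
            nlinarith [hCS, hn0, mul_pos hn0 hn0]
          linarith [hsplit, hgk, hquad, hquad2, hkey, hn2,
            mul_nonneg (show (0:ℝ) ≤ (n:ℝ) - 2 by linarith) (sq_nonneg r)]
    linarith
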